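/- arXiv:2006.03456 — 2 statements merged into one kernel-verified Lean document; each statement's English description precedes it below -/
import Mathlib

section
/- Let T be an admissible C-tree of rank k ≥ 1 whose top two level readings satisfy ω_k(T) ⪯ ω_{k−1}(T) (i.e., their concatenation is a tableau word). Then the label of T at the inner vertex (k−1)1⁻ is zero: s((k−1)1⁻) = 0. -/
namespace TypeC

/-- Letters of `C_n` are encoded as indices `0, …, 2n-1` in increasing order:
index `x < n` is the unbarred value `x+1`, and index `x ≥ n` is the barred
letter `bar (2n - x)`.  `Nval n z w` is the number `N_z(w)` of letters `x` of
`w` with `x ≤ z` or `x ≥ z̄` (as values). -/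
def Nval (n z : ℕ) (w : List ℕ) : ℕ :=
  w.countP (fun x => decide (x + 1 ≤ z ∨ 2 * n - z ≤ x))

/-- A column: a strictly increasing word over `C_n`. -/
def IsColumn (n : ℕ) (w : List ℕ) : Prop :=
  List.Pairwise (· < ·) w ∧ ∀ x ∈ w, x < 2 * n

/-- An admissible column: nonempty and `N_z(w) ≤ z` for all `z = 1,…,n`. -/
def Admissible (n : ℕ) (w : List ℕ) : Prop :=
  IsColumn n w ∧ w ≠ [] ∧ ∀ z, 1 ≤ z → z ≤ n → Nval n z w ≤ z

/-- `v` is a (nonempty) strict factor of `w`. -/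
def StrictFactor (v w : List ℕ) : Prop :=
  v ≠ [] ∧ ∃ w₀ w₁, w = w₀ ++ v ++ w₁ ∧ ¬(w₀ = [] ∧ w₁ = [])

/-- An almost admissible column: not admissible, but all strict factors are. -/
def AlmostAdmissible (n : ℕ) (w : List ℕ) : Prop :=
  IsColumn n w ∧ ¬Admissible n w ∧ ∀ v, StrictFactor v w → Admissible n v

/-- Lecouvey's defining relations `R₁`, `R₂`, `R₃` of the type `C` plactic
monoid, on words of letter indices.  The bar involution on indices is
`x ↦ 2n - 1 - x`; the unbarred value `x` has index `x - 1` and `x̄` has index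
`2n - x`. -/
inductive PlStep (n : ℕ) : List ℕ → List ℕ → Prop
  | R1a (x y z : ℕ) : x ≤ y → y < z → z < 2 * n → z ≠ 2 * n - 1 - x →
      PlStep n [y, z, x] [y, x, z]
  | R1b (x y z : ℕ) : x < y → y ≤ z → z < 2 * n → z ≠ 2 * n - 1 - x →
      PlStep n [x, z, y] [z, x, y]
  | R2a (x y : ℕ) : 1 < x → x ≤ n → x - 1 ≤ y → y ≤ 2 * n - x →
      PlStep n [y, 2 * n - x + 1, x - 2] [y, x - 1, 2 * n - x]
  | R2b (x y : ℕ) : 1 < x → x ≤ n → x - 1 ≤ y → y ≤ 2 * n - x →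
      PlStep n [x - 1, 2 * n - x, y] [2 * n - x + 1, x - 2, y]
  | R3 (w : List ℕ) (z : ℕ) : AlmostAdmissible n w → 1 ≤ z → z ≤ n →
      (z - 1) ∈ w → (2 * n - z) ∈ w → Nval n z w = z + 1 →
      (∀ z', 1 ≤ z' → z' < z →
        ¬((z' - 1) ∈ w ∧ (2 * n - z') ∈ w ∧ Nval n z' w = z' + 1)) →
      PlStep n w ((w.erase (z - 1)).erase (2 * n - z))

/-- One plactic rewriting step in context. -/
def CtxStep (n : ℕ) (u v : List ℕ) : Prop :=
  ∃ a b x y, PlStep n x y ∧ u = a ++ x ++ b ∧ v = a ++ y ++ b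

/-- The plactic congruence of type `C`. -/
def PlacticEq (n : ℕ) : List ℕ → List ℕ → Prop :=
  Relation.EqvGen (CtxStep n)

/-- An `(a,b)`-configuration (Kashiwara–Nakashima) in the pair of columns
`(c, d)`. -/
def HasConfig (n : ℕ) (c d : List ℕ) : Prop :=
  ∃ a b p q r s, 1 ≤ a ∧ a ≤ b ∧ b ≤ n ∧ p ≤ q ∧ q < r ∧ r ≤ s ∧
    ((getElem? c p = some (a - 1) ∧ getElem? d q = some (b - 1) ∧
      getElem? d r = some (2 * n - b) ∧ getElem? d s = some (2 * n - a)) ∨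
     (getElem? c p = some (a - 1) ∧ getElem? c q = some (b - 1) ∧
      getElem? c r = some (2 * n - b) ∧ getElem? d s = some (2 * n - a))) ∧
    b - a ≤ (s - r) + (q - p)

/-- `Prec n c d` means `c ⪯ d` : `c` is at least as long as `d`, entrywise
`≤`, and there is no `(a,b)`-configuration.  With the convention `ε = []`,
this gives `c ⪯ ε` for every `c`. -/
def Prec (n : ℕ) (c d : List ℕ) : Prop :=
  d.length ≤ c.length ∧
  (∀ i xi yi, getElem? c (i : ℕ) = some xi → getElem? d i = some yi → xi ≤ yi) ∧
  ¬HasConfig n c d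

/-- A generator of `ACol`: the empty column `ε = []` or an admissible column. -/
def ColOrEps (n : ℕ) (c : List ℕ) : Prop := c = [] ∨ Admissible n c

/-- `(c₁ ← c₂) = d₁d₂` : the pair `(d₁, d₂)` is the `ε`-padded normal form of
the column insertion, characterised as the normal pair plactically congruent
to `c₁c₂`. -/
def InsPair (n : ℕ) (c₁ c₂ d₁ d₂ : List ℕ) : Prop :=
  ColOrEps n d₁ ∧ ColOrEps n d₂ ∧ Prec n d₂ d₁ ∧
  PlacticEq n (c₁ ++ c₂) (d₁ ++ d₂)

/-- A rewriting step of the `2`-polygraph `ACol` at position `j`. -/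
def StepAt (n : ℕ) (j : ℕ) (w w' : List (List ℕ)) : Prop :=
  ∃ (u v : List (List ℕ)) (c₁ c₂ d₁ d₂ : List ℕ),
    u.length = j ∧ w = u ++ c₁ :: c₂ :: v ∧ w' = u ++ d₁ :: d₂ :: v ∧
    ¬Prec n c₂ c₁ ∧ InsPair n c₁ c₂ d₁ d₂

/-- A rewriting step of `ACol` (at some position). -/
def AColStep (n : ℕ) (w w' : List (List ℕ)) : Prop := ∃ j, StepAt n j w w'

/-- The congruence generated by `ACol`, presenting `Pl^ℕ(C_n)`. -/
def AColEq (n : ℕ) : List (List ℕ) → List (List ℕ) → Prop :=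
  Relation.EqvGen (AColStep n)

/-- `RedTo n w s w'` : applying the reduction strategy `s` (a list of
positions) to `w` is valid and yields `w'`. -/
inductive RedTo (n : ℕ) : List (List ℕ) → List ℕ → List (List ℕ) → Prop
  | nil (w : List (List ℕ)) : RedTo n w [] w
  | cons {w w' w'' : List (List ℕ)} {j : ℕ} {s : List ℕ} :
      StepAt n j w w' → RedTo n w' s w'' → RedTo n w (j :: s) w''

/-- A tableau word: a word of admissible columns with `c_{i+1} ⪯ c_i`. -/
def TabWord (n : ℕ) (g : List (List ℕ)) : Prop :=
  (∀ c ∈ g, Admissible n c) ∧ List.Chain' (fun cl cr => Prec n cr cl) g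

/-- The label of the crystal edge going out of the letter with index `x`. -/
def labelOf (n x : ℕ) : ℕ := if x < n then x + 1 else 2 * n - 1 - x

def phiL (n i x : ℕ) : ℕ := if x + 1 < 2 * n ∧ labelOf n x = i then 1 else 0

def epsL (n i x : ℕ) : ℕ := if 0 < x ∧ labelOf n (x - 1) = i then 1 else 0

/-- `ε_i` of a word (Kashiwara). -/
def epsW (n i : ℕ) : List ℕ → ℕ
  | [] => 0
  | x :: u => epsL n i x + (epsW n i u - phiL n i x)

/-- `φ_i` of a word (Kashiwara). -/
def phiW (n i : ℕ) : List ℕ → ℕ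
  | [] => 0
  | x :: u => phiW n i u + (phiL n i x - epsW n i u)

/-- The Kashiwara lowering operator `f_i` on words of `C_n^*`. -/
def fW (n i : ℕ) : List ℕ → Option (List ℕ)
  | [] => none
  | x :: u =>
      if epsW n i u < phiL n i x then some ((x + 1) :: u)
      else (fW n i u).map (x :: ·)

/-- The Kashiwara raising operator `e_i` on words of `C_n^*`. -/
def eW (n i : ℕ) : List ℕ → Option (List ℕ)
  | [] => none
  | x :: u =>
      if epsW n i u ≤ phiL n i x then
        (if epsL n i x = 1 then some ((x - 1) :: u) else none)
      else (eW n i u).map (x :: ·)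

/-- `f_i` on words over `ACol(C_n)` (each letter a column, `ε = []`). -/
def fA (n i : ℕ) : List (List ℕ) → Option (List (List ℕ))
  | [] => none
  | c :: w =>
      if epsW n i w.flatten < phiW n i c then (fW n i c).map (· :: w)
      else (fA n i w).map (c :: ·)

/-- `e_i` on words over `ACol(C_n)`. -/
def eA (n i : ℕ) : List (List ℕ) → Option (List (List ℕ))
  | [] => none
  | c :: w =>
      if epsW n i w.flatten ≤ phiW n i c then (eW n i c).map (· :: w)
      else (eA n i w).map (c :: ·)

/-! C-trees.  A labeling of the `C`-tree is encoded by two functions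
`sOut i j = s(ij)` (outer vertices, `sOut i 0 = s(i)`) and
`sInn i j = s(ij⁻)` (inner vertices, `j ≥ 1`), for strands `i ≥ 1`. -/

def SO (sOut : ℕ → ℕ → ℕ) (i j : ℕ) : ℕ := ∑ l ∈ Finset.range (j + 1), sOut i l
def SI (sInn : ℕ → ℕ → ℕ) (i j : ℕ) : ℕ := ∑ l ∈ Finset.range (j + 1), sInn i l

/-- The valuation `q(ij)` at an outer vertex. -/
def qOut (sOut sInn : ℕ → ℕ → ℕ) (i j : ℕ) : ℕ := SO sOut i j - SI sInn i (j - 1)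

/-- The valuation `q(ij⁻)` at an inner vertex. -/
def qInn (sOut sInn : ℕ → ℕ → ℕ) (i j : ℕ) : ℕ := SO sOut i j - SI sInn i j

/-- Labels vanish outside the rank-`k` truncation (and on the fictitious
strand `0` and inner vertices `i0⁻`). -/
def TreeSupport (k : ℕ) (sOut sInn : ℕ → ℕ → ℕ) : Prop :=
  (∀ i j, i = 0 ∨ k < i + j → sOut i j = 0) ∧
  (∀ i j, i = 0 ∨ j = 0 ∨ k < i + j → sInn i j = 0)

/-- `n`-labeling condition: `0 ≤ q(v) ≤ n` at every vertex. -/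
def NLabeled (n : ℕ) (sOut sInn : ℕ → ℕ → ℕ) : Prop :=
  ∀ i j, SI sInn i j ≤ SO sOut i j ∧ qOut sOut sInn i j ≤ n

/-- Column conditions: `q(ij) ≤ q((i−1)(j+1)⁻)` and `q(ij) ≤ q((i−1)j⁻)`. -/
def ColumnCond (k : ℕ) (sOut sInn : ℕ → ℕ → ℕ) : Prop :=
  ∀ i j, 2 ≤ i → i + j ≤ k →
    qOut sOut sInn i j ≤ qInn sOut sInn (i - 1) (j + 1) ∧
    (1 ≤ j → qOut sOut sInn i j ≤ qInn sOut sInn (i - 1) j)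

/-- Admissibility conditions of a labeled `C`-tree. -/
def AdmissCond (k : ℕ) (sOut sInn : ℕ → ℕ → ℕ) : Prop :=
  ∀ t l, t ≤ k → l + 1 ≤ t →
    (∑ i ∈ Finset.range (l + 1), (sOut (t - i) i + sInn (t - i) i)) ≤
      qOut sOut sInn (t - l) l

/-- An admissible `n`-labeled `C`-tree of rank `k`. -/
def IsAdmTree (n k : ℕ) (sOut sInn : ℕ → ℕ → ℕ) : Prop :=
  TreeSupport k sOut sInn ∧ NLabeled n sOut sInn ∧
  ColumnCond k sOut sInn ∧ AdmissCond k sOut sInn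

/-- The block column `ρ(ij)` read off an outer vertex. -/
def rhoOut (sOut sInn : ℕ → ℕ → ℕ) (i j : ℕ) : List ℕ :=
  if j = 0 then List.range (sOut i 0)
  else List.range' (qInn sOut sInn i (j - 1)) (sOut i j)

/-- The block column `ρ(ij⁻)` read off an inner vertex. -/
def rhoInn (n : ℕ) (sOut sInn : ℕ → ℕ → ℕ) (i j : ℕ) : List ℕ :=
  List.range' (2 * n - qOut sOut sInn i j) (sInn i j)

/-- The reading `ω_t` of the `t`-th level. -/
def levelWord (n : ℕ) (sOut sInn : ℕ → ℕ → ℕ) (t : ℕ) : List ℕ :=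
  ((List.range t).map (fun l => rhoOut sOut sInn (t - l) l)).flatten ++
  ((List.range (t - 1)).map (fun m => rhoInn n sOut sInn (m + 1) (t - (m + 1)))).flatten

/-- The reading `ω(T) ∈ ACol(C_n)^*` of a labeled `C`-tree of rank `k`. -/
def omegaT (n k : ℕ) (sOut sInn : ℕ → ℕ → ℕ) : List (List ℕ) :=
  (List.range k).map (fun t => levelWord n sOut sInn (t + 1))

/-- If the top two level readings of an admissible `C`-tree of rank `k ≥ 1`
satisfy `ω_k(T) ⪯ ω_{k−1}(T)` (their concatenation is a tableau word), then
the label at the inner vertex `(k−1)1⁻` vanishes: `s((k−1)1⁻) = 0`. -/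
theorem stmt16 (n k : ℕ) (hk : 1 ≤ k) (sOut sInn : ℕ → ℕ → ℕ)
    (h : IsAdmTree n k sOut sInn)
    (hprec : Prec n (levelWord n sOut sInn k) (levelWord n sOut sInn (k - 1))) :
    sInn (k - 1) 1 = 0 := by
  obtain ⟨hsupp, hlab, hcol, hadm⟩ := h
  rcases le_or_gt k 1 with hk1 | hk2
  · have hk1' : k = 1 := le_antisymm hk1 hk
    subst hk1'
    exact hsupp.2 0 1 (Or.inl rfl)
  · obtain ⟨m, rfl⟩ : ∃ m, k = m + 2 := ⟨k - 2, by omega⟩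
    by_contra hH0
    have hH : 1 ≤ sInn (m + 1) 1 := Nat.one_le_iff_ne_zero.2 (by simpa using hH0)
    have hin0 : ∀ i, sInn i 0 = 0 := fun i => hsupp.2 i 0 (Or.inr (Or.inl rfl))
    have hSIle : ∀ i j, SI sInn i j ≤ SO sOut i j := fun i j => (hlab i j).1
    have hq0 : qOut sOut sInn (m+1) 0 = sOut (m+1) 0 := by
      simp [qOut, SO, SI, Finset.sum_range_one, hin0]
    have han : sOut (m+1) 0 ≤ n := by
      have := (hlab (m+1) 0).2
      rwa [hq0] at this
    have hq1 : qOut sOut sInn (m+1) 1 = sOut (m+1) 0 + sOut (m+1) 1 := by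
      simp [qOut, SO, SI, Finset.sum_range_succ, Finset.sum_range_one, hin0]
    -- Step 1 : D + H ≤ a
    have hDHa : sOut (m+2) 0 + sInn (m+1) 1 ≤ sOut (m+1) 0 := by
      have hA := hadm (m+2) 1 le_rfl (by omega)
      have e1 : m + 2 - 1 = m + 1 := by omega
      rw [e1, Finset.sum_range_succ, Finset.sum_range_one, hq1, e1] at hA
      have h0 := hin0 (m+2-0)
      have e0 : m + 2 - 0 = m + 2 := by omega
      rw [e0] at h0 hA
      omega
    -- relation between qOut and qInn
    have hqOut_succ : ∀ i l, qOut sOut sInn i (l+1) = qInn sOut sInn i l + sOut i (l+1) := by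
      intro i l
      have h1 := hSIle i l
      have h2 : SO sOut i (l+1) = SO sOut i l + sOut i (l+1) := by
        simp [SO, Finset.sum_range_succ]
      have e1 : l + 1 - 1 = l := by omega
      simp only [qOut, qInn, e1]
      omega
    -- Step 2 : lower bound on qInn along level k
    have hqInn_lb : ∀ l, l ≤ m →
        sOut (m+2) 0 + sInn (m+1) 1 ≤ qInn sOut sInn (m+2-(l+1)) l := by
      intro l hl
      have hA := hadm (m+2) (l+1) le_rfl (by omega)
      have e1 : m + 2 - 1 = m + 1 := by omega
      have e0 : m + 2 - 0 = m + 2 := by omega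
      have hsum : sOut (m+2) 0 + sInn (m+1) 1 + sOut (m+2-(l+1)) (l+1) ≤
          ∑ i ∈ Finset.range (l+1+1), (sOut (m+2-i) i + sInn (m+2-i) i) := by
        rcases Nat.eq_zero_or_pos l with rfl | hlpos
        · rw [Finset.sum_range_succ, Finset.sum_range_one, e1, e0]
          have h0 := hin0 (m+2)
          simp only [Nat.zero_add]
          omega
        · have hstep1 : sOut (m+2) 0 + sInn (m+1) 1 ≤
              ∑ i ∈ Finset.range 2, (sOut (m+2-i) i + sInn (m+2-i) i) := by
            rw [Finset.sum_range_succ, Finset.sum_range_one, e1, e0]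
            have h0 := hin0 (m+2)
            omega
          have hstep2 : (∑ i ∈ Finset.range 2, (sOut (m+2-i) i + sInn (m+2-i) i)) ≤
              ∑ i ∈ Finset.range (l+1), (sOut (m+2-i) i + sInn (m+2-i) i) :=
            Finset.sum_le_sum_of_subset (Finset.range_subset_range.2 (by omega))
          rw [Finset.sum_range_succ]
          omega
      have hq := hqOut_succ (m+2-(l+1)) l
      omega
    -- decompose the level-k word
    set L1 := (((List.range (m+1)).map (fun l => rhoOut sOut sInn (m+2-(l+1)) (l+1))).flatten)
      with hL1
    set L2 := (((List.range (m+1)).map (fun j => rhoInn n sOut sInn (j+1) (m+2-(j+1)))).flatten)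
      with hL2
    have hcEq : levelWord n sOut sInn (m+2) =
        List.range (sOut (m+2) 0) ++ (L1 ++ L2) := by
      rw [hL1, hL2, levelWord, List.range_succ_eq_map, List.map_cons, List.flatten_cons,
        List.map_map, List.append_assoc]
      rfl
    -- L2 is nonempty
    have e1 : m + 2 - (m+1) = 1 := by omega
    have hblk : rhoInn n sOut sInn (m+1) 1 ∈
        (List.range (m+1)).map (fun j => rhoInn n sOut sInn (j+1) (m+2-(j+1))) := by
      refine List.mem_map.2 ⟨m, List.mem_range.2 (by omega), ?_⟩
      rw [e1]
    have hL2ne : L2 ≠ [] := by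
      intro hnil
      have hm : (2 * n - qOut sOut sInn (m+1) 1) ∈ L2 := by
        rw [hL2]
        exact List.mem_flatten.2 ⟨_, hblk, by
          rw [rhoInn]; exact List.mem_range'_1.2 ⟨le_rfl, by omega⟩⟩
      rw [hnil] at hm
      exact absurd hm (List.not_mem_nil)
    have hne : L1 ++ L2 ≠ [] := by
      intro hnil
      exact hL2ne (List.append_eq_nil_iff.1 hnil).2
    obtain ⟨y, t, hyt⟩ := List.exists_cons_of_ne_nil hne
    have hmemx : y ∈ L1 ++ L2 := by rw [hyt]; exact List.mem_cons_self
    have hgetx : (L1 ++ L2)[0]? = some y := by rw [hyt]; rfl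
    -- the letter at position D of the level-k word exceeds D
    have hDx : sOut (m+2) 0 < y := by
      rcases List.mem_append.1 hmemx with hx1 | hx2
      · rw [hL1] at hx1
        obtain ⟨blk, hblkmem, hxblk⟩ := List.mem_flatten.1 hx1
        obtain ⟨l, hlmem, rfl⟩ := List.mem_map.1 hblkmem
        have hl : l ≤ m := by
          have := List.mem_range.1 hlmem; omega
        rw [rhoOut, if_neg (by omega), Nat.add_sub_cancel] at hxblk
        have h1 := (List.mem_range'_1.1 hxblk).1
        have h2 := hqInn_lb l hl
        omega
      · rw [hL2] at hx2
        obtain ⟨blk, hblkmem, hxblk⟩ := List.mem_flatten.1 hx2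
        obtain ⟨jj, hjmem, rfl⟩ := List.mem_map.1 hblkmem
        rw [rhoInn] at hxblk
        have h1 := (List.mem_range'_1.1 hxblk).1
        have h2 := (hlab (jj+1) (m+2-(jj+1))).2
        omega
    have hcget : (levelWord n sOut sInn (m+2))[sOut (m+2) 0]? = some y := by
      rw [hcEq, List.getElem?_append_right (by simp)]
      simpa using hgetx
    -- the letter at position D of the level-(k-1) word is D
    have hdEq : levelWord n sOut sInn (m+1) = List.range (sOut (m+1) 0) ++
        ((((List.range m).map (fun l => rhoOut sOut sInn (m+1-(l+1)) (l+1))).flatten) ++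
         (((List.range m).map (fun j => rhoInn n sOut sInn (j+1) (m+1-(j+1)))).flatten)) := by
      rw [levelWord, List.range_succ_eq_map, List.map_cons, List.flatten_cons,
        List.map_map, List.append_assoc]
      rfl
    have hdget : (levelWord n sOut sInn (m+1))[sOut (m+2) 0]? =
        some (sOut (m+2) 0) := by
      rw [hdEq, List.getElem?_append_left (by simpa using (by omega : sOut (m+2) 0 < sOut (m+1) 0))]
      exact List.getElem?_range (by omega)
    have hfin := hprec.2.1 (sOut (m+2) 0) y (sOut (m+2) 0) hcget hdget
    omega


end TypeC
end

section
/- In the rewriting system ACol for Pl^ℕ(C₃) (n = 3), the word w = (12)(1)(2 2̄) — i.e., t = 12, u = 1, v = 2 2̄ as admissible columns — has leftmost reduction strategy of length exactly 4 and rightmost reduction strategy of length exactly 3; hence the bound (4,3) on shapes of generating 3-cells is attained. -/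
namespace TypeC

-- Auxiliary lemmas

lemma adm_tac (w : List ℕ) (h1 : IsColumn 3 w) (h2 : w ≠ [])
    (h3 : ∀ z, 1 ≤ z → z ≤ 3 → Nval 3 z w ≤ z) : Admissible 3 w := ⟨h1, h2, h3⟩

lemma adm0 : Admissible 3 [0] := ⟨⟨by decide, by decide⟩, by decide, by
  intro z h1 h3; interval_cases z <;> decide⟩

lemma adm1 : Admissible 3 [1] := ⟨⟨by decide, by decide⟩, by decide, by
  intro z h1 h3; interval_cases z <;> decide⟩

lemma adm4 : Admissible 3 [4] := ⟨⟨by decide, by decide⟩, by decide, by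
  intro z h1 h3; interval_cases z <;> decide⟩

lemma adm5 : Admissible 3 [5] := ⟨⟨by decide, by decide⟩, by decide, by
  intro z h1 h3; interval_cases z <;> decide⟩

lemma adm01 : Admissible 3 [0, 1] := ⟨⟨by decide, by decide⟩, by decide, by
  intro z h1 h3; interval_cases z <;> decide⟩

lemma adm14 : Admissible 3 [1, 4] := ⟨⟨by decide, by decide⟩, by decide, by
  intro z h1 h3; interval_cases z <;> decide⟩

lemma adm15 : Admissible 3 [1, 5] := ⟨⟨by decide, by decide⟩, by decide, by
  intro z h1 h3; interval_cases z <;> decide⟩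

lemma noConfig_small (c d : List ℕ) (hd : ∀ x ∈ d, x < 3) : ¬HasConfig 3 c d := by
  rintro ⟨a, b, p, q, r, s, ha, hab, hb, _, _, _, hor, _⟩
  have key : ∀ t : ℕ, getElem? d t = some (2 * 3 - a) → False := by
    intro t ht
    have hm : (2 * 3 - a) ∈ d := List.mem_of_getElem? ht
    have := hd _ hm
    omega
  rcases hor with ⟨_, _, _, h⟩ | ⟨_, _, _, h⟩ <;> exact key _ h

lemma strictFactor_three (a b c : ℕ) (v : List ℕ) (h : StrictFactor v [a, b, c]) :
    v = [a] ∨ v = [b] ∨ v = [c] ∨ v = [a, b] ∨ v = [b, c] := by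
  obtain ⟨hv, w₀, w₁, heq, hne⟩ := h
  rcases w₀ with _ | ⟨x, _ | ⟨y, _ | ⟨z, w₀⟩⟩⟩ <;>
    rcases v with _ | ⟨p, _ | ⟨q, _ | ⟨r, v⟩⟩⟩ <;> simp_all

lemma almost014 : AlmostAdmissible 3 [0, 1, 4] := by
  refine ⟨⟨by decide, by decide⟩, ?_, ?_⟩
  · rintro ⟨_, _, h⟩
    have := h 2 (by norm_num) (by norm_num)
    revert this; decide
  · intro v hv
    rcases strictFactor_three _ _ _ _ hv with rfl | rfl | rfl | rfl | rfl
    exacts [adm0, adm1, adm4, adm01, adm14]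

lemma almost015 : AlmostAdmissible 3 [0, 1, 5] := by
  refine ⟨⟨by decide, by decide⟩, ?_, ?_⟩
  · rintro ⟨_, _, h⟩
    have := h 1 (by norm_num) (by norm_num)
    revert this; decide
  · intro v hv
    rcases strictFactor_three _ _ _ _ hv with rfl | rfl | rfl | rfl | rfl
    exacts [adm0, adm1, adm5, adm01, adm15]

lemma prec01_0 : Prec 3 [0, 1] [0] := by
  refine ⟨by norm_num, ?_, noConfig_small _ _ (by decide)⟩
  intro i xi yi h1 h2
  match i with
  | 0 => simp at h1 h2; omega
  | n + 1 => simp at h2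

lemma prec0_1 : Prec 3 [0] [1] := by
  refine ⟨by norm_num, ?_, noConfig_small _ _ (by decide)⟩
  intro i xi yi h1 h2
  match i with
  | 0 => simp at h1 h2; omega
  | n + 1 => simp at h2

lemma prec_eps (c : List ℕ) : Prec 3 c [] := by
  refine ⟨by simp, ?_, noConfig_small _ _ (by simp)⟩
  intro i xi yi h1 h2
  simp at h2

-- key plactic equivalences
lemma pleq_A : PlacticEq 3 [0, 1, 0] [0, 0, 1] := by
  refine Relation.EqvGen.rel _ _ ⟨[], [], [0, 1, 0], [0, 0, 1], ?_, rfl, rfl⟩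
  exact PlStep.R1a 0 0 1 (by norm_num) (by norm_num) (by norm_num) (by norm_num)

lemma pleq_E : PlacticEq 3 [0, 1, 4] [0] := by
  refine Relation.EqvGen.rel _ _ ⟨[], [], [0, 1, 4], [0], ?_, rfl, rfl⟩
  have h := PlStep.R3 (n := 3) [0, 1, 4] 2 almost014 (by norm_num) (by norm_num)
    (by decide) (by decide) (by decide) ?_
  · exact h
  · intro z' h1 h2
    interval_cases z'
    decide

lemma pleq_B : PlacticEq 3 [0, 1, 1, 4] [1, 0] := by
  have s1 : CtxStep 3 [0, 1, 5, 0] [0, 1, 1, 4] := by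
    refine ⟨[0], [], [1, 5, 0], [1, 1, 4], ?_, rfl, rfl⟩
    exact PlStep.R2a 2 1 (by norm_num) (by norm_num) (by norm_num) (by norm_num)
  have s2 : CtxStep 3 [0, 1, 5, 0] [1, 0] := by
    refine ⟨[], [0], [0, 1, 5], [1], ?_, rfl, rfl⟩
    have h := PlStep.R3 (n := 3) [0, 1, 5] 1 almost015 (by norm_num) (by norm_num)
      (by decide) (by decide) (by decide) ?_
    · exact h
    · intro z' h1 h2; omega
  exact Relation.EqvGen.trans _ _ _
    (Relation.EqvGen.symm _ _ (Relation.EqvGen.rel _ _ s1))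
    (Relation.EqvGen.rel _ _ s2)
/-- In `ACol` for `n = 3`, the word `(12)(1)(2 2̄)` (letter indices: `1 ↦ 0`,
`2 ↦ 1`, `2̄ ↦ 4`) has leftmost reduction strategy of length exactly `4`:
`(12)(1)(22̄) ⟹ (1)(12)(22̄) ⟹ (1)(2)(1) ⟹ (ε)(12)(1) ⟹ (ε)(1)(12)`,
and rightmost reduction strategy of length exactly `3`:
`(12)(1)(22̄) ⟹ (12)(ε)(1) ⟹ (ε)(12)(1) ⟹ (ε)(1)(12)`;
hence the bound `(4,3)` on shapes of generating `3`-cells is attained. -/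
theorem stmt18 :
    StepAt 3 0 [[0, 1], [0], [1, 4]] [[0], [0, 1], [1, 4]] ∧
    StepAt 3 1 [[0], [0, 1], [1, 4]] [[0], [1], [0]] ∧
    StepAt 3 0 [[0], [1], [0]] [[], [0, 1], [0]] ∧
    StepAt 3 1 [[], [0, 1], [0]] [[], [0], [0, 1]] ∧
    StepAt 3 1 [[0, 1], [0], [1, 4]] [[0, 1], [], [0]] ∧
    StepAt 3 0 [[0, 1], [], [0]] [[], [0, 1], [0]] ∧
    (∀ w', ¬AColStep 3 [[], [0], [0, 1]] w') := by
  have hnpA : ¬Prec 3 [0] [0, 1] := by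
    rintro ⟨hl, -, -⟩; simp at hl
  have hnpB : ¬Prec 3 [1, 4] [0, 1] := by
    rintro ⟨-, h, -⟩; have := h 0 1 0 rfl rfl; omega
  have hnpC : ¬Prec 3 [1] [0] := by
    rintro ⟨-, h, -⟩; have := h 0 1 0 rfl rfl; omega
  have hnpE : ¬Prec 3 [1, 4] [0] := by
    rintro ⟨-, h, -⟩; have := h 0 1 0 rfl rfl; omega
  have hnpF : ¬Prec 3 [] [0, 1] := by
    rintro ⟨hl, -, -⟩; simp at hl
  have insA : InsPair 3 [0, 1] [0] [0] [0, 1] :=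
    ⟨Or.inr adm0, Or.inr adm01, prec01_0, pleq_A⟩
  refine ⟨⟨[], [[1, 4]], [0, 1], [0], [0], [0, 1], rfl, rfl, rfl, hnpA, insA⟩,
    ⟨[[0]], [], [0, 1], [1, 4], [1], [0], rfl, rfl, rfl, hnpB,
      Or.inr adm1, Or.inr adm0, prec0_1, pleq_B⟩,
    ⟨[], [[0]], [0], [1], [], [0, 1], rfl, rfl, rfl, hnpC,
      Or.inl rfl, Or.inr adm01, prec_eps _, Relation.EqvGen.refl _⟩,
    ⟨[[]], [], [0, 1], [0], [0], [0, 1], rfl, rfl, rfl, hnpA, insA⟩,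
    ⟨[[0, 1]], [], [0], [1, 4], [], [0], rfl, rfl, rfl, hnpE,
      Or.inl rfl, Or.inr adm0, prec_eps _, pleq_E⟩,
    ⟨[], [[0]], [0, 1], [], [], [0, 1], rfl, rfl, rfl, hnpF,
      Or.inl rfl, Or.inr adm01, prec_eps _, Relation.EqvGen.refl _⟩, ?_⟩
  rintro w' ⟨j, u, v, c₁, c₂, d₁, d₂, hj, hw, hw', hnp, -⟩
  rcases u with _ | ⟨u0, _ | ⟨u1, u⟩⟩
  · simp only [List.nil_append, List.cons.injEq] at hw
    obtain ⟨rfl, rfl, rfl⟩ := hw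
    exact hnp (prec_eps _)
  · simp only [List.cons_append, List.nil_append, List.cons.injEq] at hw
    obtain ⟨rfl, rfl, rfl, rfl⟩ := hw
    exact hnp prec01_0
  · have := congrArg List.length hw
    simp at this; omega

end TypeC
end
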